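/- Suppose n and k are positive integers with e^8 n^{1/3} ≤ k ≤ n^{1/3} e^n. Then the minimax risk for the class F_k satisfies R_n(F_k) ≥ (1/32) · ( log(k/n^{1/3}) / n )^{1/3}, where log denotes the natural logarithm. -/

import Mathlib

set_option maxHeartbeats 1000000


open Finset

/-- The class `F_k` of non-increasing probability densities on `{1, …, k}`,
represented as functions `ℕ → ℝ` vanishing outside of `{1, …, k}`. -/
def Fk (k : ℕ) : Set (ℕ → ℝ) :=
  {f | (∀ x, 0 ≤ f x) ∧ (∀ x, x ∉ Finset.Icc 1 k → f x = 0) ∧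
    (∑ x ∈ Finset.Icc 1 k, f x = 1) ∧
    (∀ x, 1 ≤ x → x + 1 ≤ k → f (x + 1) ≤ f x)}

/-- Total variation distance between two functions on `{1, …, k}`:
`TV(g, f) = (1/2) ∑_{x=1}^{k} |g x - f x|`. -/
noncomputable def TVk (k : ℕ) (g f : ℕ → ℝ) : ℝ :=
  (∑ x ∈ Finset.Icc 1 k, |g x - f x|) / 2

/-- The risk of the density estimate `φ` (a map taking the `n` sample points to a
function on `{1, …, k}`) over the class `F`: the worst-case, over `f ∈ F`, expected
total variation distance between the estimate and `f`, the expectation being over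
`n` i.i.d. samples drawn from the density `f`. -/
noncomputable def risk (n k : ℕ) (φ : (Fin n → ℕ) → ℕ → ℝ) (F : Set (ℕ → ℝ)) : ℝ :=
  ⨆ f ∈ F, ∑ x ∈ Fintype.piFinset (fun _ : Fin n => Finset.Icc 1 k),
    (∏ i, f (x i)) * TVk k (φ x) f

/-- The minimax risk `R_n(F)`: the infimum of the risk over all density estimates. -/
noncomputable def minimaxRisk (n k : ℕ) (F : Set (ℕ → ℝ)) : ℝ :=
  ⨅ φ : (Fin n → ℕ) → ℕ → ℝ, risk n k φ F


namespace S18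

structure Good (n k : ℕ) : Prop where
  hn : 1 ≤ n
  hk : 1 ≤ k
  hk1 : Real.exp 8 * (n : ℝ) ^ ((1 : ℝ) / 3) ≤ (k : ℝ)
  hk2 : (k : ℝ) ≤ (n : ℝ) ^ ((1 : ℝ) / 3) * Real.exp n

noncomputable def LL (n k : ℕ) : ℝ := Real.log k - Real.log n / 3
noncomputable def ee (n k : ℕ) : ℝ := (LL n k / n) ^ ((1:ℝ)/3) / 3
noncomputable def qq (n k : ℕ) : ℝ := 1 / (6 * n * ee n k ^ 2)
noncomputable def mm (n k : ℕ) : ℕ := ⌈6 * (n:ℝ) * ee n k ^ 2⌉₊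
noncomputable def rr (n k : ℕ) : ℝ := (1 + ee n k) / (1 - ee n k)
noncomputable def ss (n k : ℕ) (j : ℕ) : ℕ := ⌈rr n k ^ j⌉₊
noncomputable def cc (n k : ℕ) : ℕ → ℕ
  | 0 => 2
  | j+1 => cc n k j + 2 * ss n k j
noncomputable def vv (n k : ℕ) (j : ℕ) : ℝ := qq n k / 4 / rr n k ^ j
noncomputable def MM (n k : ℕ) : ℝ :=
  1 - ∑ j ∈ Finset.range (mm n k), 2 * vv n k j * (ss n k j : ℝ)

variable {n k : ℕ}

lemma n0 (h : Good n k) : (0:ℝ) < n := by exact_mod_cast h.hn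

lemma k0 (h : Good n k) : (0:ℝ) < k := by exact_mod_cast h.hk

lemma rp0 (h : Good n k) : (0:ℝ) < (n:ℝ) ^ ((1:ℝ)/3) :=
  Real.rpow_pos_of_pos (n0 h) _

lemma log_rpow_third (h : Good n k) :
    Real.log ((n:ℝ) ^ ((1:ℝ)/3)) = Real.log n / 3 := by
  rw [Real.log_rpow (n0 h)]; ring

lemma hL8 (h : Good n k) : 8 ≤ LL n k := by
  have h2 : Real.log (Real.exp 8 * (n : ℝ) ^ ((1 : ℝ) / 3)) ≤ Real.log k :=
    Real.log_le_log (mul_pos (Real.exp_pos 8) (rp0 h)) h.hk1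
  rw [Real.log_mul (Real.exp_ne_zero 8) (ne_of_gt (rp0 h)), Real.log_exp,
    log_rpow_third h] at h2
  unfold LL; linarith

lemma hLn (h : Good n k) : LL n k ≤ n := by
  have h2 : Real.log k ≤ Real.log ((n : ℝ) ^ ((1 : ℝ) / 3) * Real.exp n) :=
    Real.log_le_log (k0 h) h.hk2
  rw [Real.log_mul (ne_of_gt (rp0 h)) (Real.exp_ne_zero _), Real.log_exp,
    log_rpow_third h] at h2
  unfold LL; linarith

lemma hL0 (h : Good n k) : 0 < LL n k := lt_of_lt_of_le (by norm_num) (hL8 h)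

lemma hn8 (h : Good n k) : (8:ℝ) ≤ (n:ℝ) := le_trans (hL8 h) (hLn h)

lemma hLn0 (h : Good n k) : 0 < LL n k / n := div_pos (hL0 h) (n0 h)

lemma expL (h : Good n k) : (n:ℝ) ^ ((1:ℝ)/3) * Real.exp (LL n k) = k := by
  unfold LL
  rw [Real.exp_sub, Real.exp_log (k0 h)]
  rw [show Real.log ↑n / 3 = Real.log ((n:ℝ) ^ ((1:ℝ)/3)) from (log_rpow_third h).symm]
  rw [Real.exp_log (rp0 h)]
  rw [mul_comm, div_mul_eq_mul_div, mul_div_assoc, div_self (ne_of_gt (rp0 h)), mul_one]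

lemma he0 (h : Good n k) : 0 < ee n k := by
  unfold ee
  have h1 := hLn0 h
  have : 0 < (LL n k / n) ^ ((1:ℝ)/3) := Real.rpow_pos_of_pos h1 _
  linarith

lemma he3 (h : Good n k) : ee n k ≤ 1/3 := by
  unfold ee
  have h1 : (LL n k / n) ^ ((1:ℝ)/3) ≤ 1 := by
    apply Real.rpow_le_one (hLn0 h).le
    · rw [div_le_one (n0 h)]; exact hLn h
    · norm_num
  linarith

lemma hcube (h : Good n k) : (n:ℝ) * ee n k ^ 3 = LL n k / 27 := by
  unfold ee
  rw [div_pow]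
  have h1 : ((LL n k / n) ^ ((1:ℝ)/3)) ^ (3:ℕ) = LL n k / n := by
    rw [← Real.rpow_natCast ((LL n k / n) ^ ((1:ℝ)/3)) 3, ← Real.rpow_mul (hLn0 h).le]
    norm_num
  rw [h1]
  have := n0 h
  field_simp
  ring

lemma hsq (h : Good n k) :
    (n:ℝ) * ee n k ^ 2 = (n:ℝ) ^ ((1:ℝ)/3) * LL n k ^ ((2:ℝ)/3) / 9 := by
  unfold ee
  rw [div_pow]
  have h1 : ((LL n k / n) ^ ((1:ℝ)/3)) ^ (2:ℕ) = (LL n k / n) ^ ((2:ℝ)/3) := by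
    rw [← Real.rpow_natCast ((LL n k / n) ^ ((1:ℝ)/3)) 2, ← Real.rpow_mul (hLn0 h).le]
    norm_num
  rw [h1, Real.div_rpow (hL0 h).le (n0 h).le]
  have h2 : (n:ℝ) = (n:ℝ) ^ ((1:ℝ)/3) * (n:ℝ) ^ ((2:ℝ)/3) := by
    rw [← Real.rpow_add (n0 h), ← Real.rpow_one (n:ℝ)]
    norm_num
  have hn23 : ((n:ℝ))^((2:ℝ)/3) ≠ 0 := ne_of_gt (Real.rpow_pos_of_pos (n0 h) _)
  rw [show ((n:ℝ) * (LL n k ^ ((2:ℝ)/3) / (n:ℝ)^((2:ℝ)/3) / 3^2))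
      = ((n:ℝ) / (n:ℝ)^((2:ℝ)/3)) * LL n k ^ ((2:ℝ)/3) / 9 by ring]
  nth_rewrite 1 [h2]
  field_simp

lemma hinv (h : Good n k) :
    1 / ee n k = 3 * (n:ℝ) ^ ((1:ℝ)/3) / LL n k ^ ((1:ℝ)/3) := by
  unfold ee
  rw [Real.div_rpow (hL0 h).le (n0 h).le]
  have hL13 : (0:ℝ) < LL n k ^ ((1:ℝ)/3) := Real.rpow_pos_of_pos (hL0 h) _
  field_simp

lemma hne2 (h : Good n k) : LL n k / 9 ≤ (n:ℝ) * ee n k ^ 2 := by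
  have h1 : (n:ℝ) * ee n k ^ 2 * ee n k = LL n k / 27 := by
    have := hcube h; nlinarith [this]
  have he := he0 h
  have h3 : ee n k ≤ 1/3 := he3 h
  have h4 : (0:ℝ) ≤ (n:ℝ) * ee n k ^ 2 := by positivity
  nlinarith [hL0 h]

lemma hq0 (h : Good n k) : 0 < qq n k := by
  unfold qq
  have h1 := n0 h; have h2 := he0 h
  positivity

lemma hne2_low (h : Good n k) : (8:ℝ)/9 ≤ (n:ℝ) * ee n k ^ 2 :=
  le_trans (by linarith [hL8 h] : (8:ℝ)/9 ≤ LL n k / 9) (hne2 h)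

lemma hq316 (h : Good n k) : qq n k ≤ 3/16 := by
  unfold qq
  rw [div_le_iff₀ (by nlinarith [hne2_low h])]
  nlinarith [hne2_low h]

lemma hqe (h : Good n k) : qq n k * (6 * n * ee n k ^ 2) = 1 := by
  have hx : (0:ℝ) < 6 * n * ee n k ^ 2 := by nlinarith [hne2_low h]
  unfold qq
  rw [one_div, inv_mul_cancel₀ (ne_of_gt hx)]

lemma hm_low (h : Good n k) : 6 * (n:ℝ) * ee n k ^ 2 ≤ mm n k := Nat.le_ceil _

lemma hm_up (h : Good n k) : (mm n k : ℝ) ≤ 6 * n * ee n k ^ 2 + 1 :=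
  le_of_lt (Nat.ceil_lt_add_one (by nlinarith [hne2_low h]))

lemma hm1 (h : Good n k) : 1 ≤ mm n k := by
  rw [Nat.one_le_iff_ne_zero]
  intro hc
  have h1 := hm_low h
  rw [hc] at h1
  norm_num at h1
  nlinarith [hne2_low h]

lemma hmq (h : Good n k) : 1 ≤ (mm n k : ℝ) * qq n k := by
  have h1 := hm_low h
  have h2 := hqe h
  have hq := hq0 h
  nlinarith

lemma hmq' (h : Good n k) : (mm n k : ℝ) * qq n k ≤ 1 + qq n k := by
  have h1 := hm_up h
  have h2 := hqe h
  have hq := hq0 h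
  nlinarith

lemma hr1 (h : Good n k) : 1 < rr n k := by
  unfold rr
  have := he0 h; have := he3 h
  rw [lt_div_iff₀ (by linarith)]
  linarith

lemma hr0 (h : Good n k) : 0 < rr n k := lt_trans one_pos (hr1 h)

lemma hr2 (h : Good n k) : rr n k ≤ 2 := by
  unfold rr
  have := he0 h; have := he3 h
  rw [div_le_iff₀ (by linarith)]
  linarith

lemma hs_low (h : Good n k) (j : ℕ) : rr n k ^ j ≤ (ss n k j : ℝ) := Nat.le_ceil _

lemma hs_up (h : Good n k) (j : ℕ) : (ss n k j : ℝ) < rr n k ^ j + 1 :=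
  Nat.ceil_lt_add_one (pow_nonneg (hr0 h).le j)

lemma hrj1 (h : Good n k) (j : ℕ) : (1:ℝ) ≤ rr n k ^ j :=
  one_le_pow₀ (hr1 h).le

lemma hs1 (h : Good n k) (j : ℕ) : 1 ≤ ss n k j := by
  have h1 := hs_low h j
  have h2 := hrj1 h j
  by_contra hc
  push_neg at hc
  interval_cases (ss n k j)
  simp at h1
  linarith

lemma hv0 (h : Good n k) (j : ℕ) : 0 < vv n k j := by
  unfold vv
  have h1 := hq0 h; have h2 := hr0 h
  positivity

lemma hsv_low (h : Good n k) (j : ℕ) : qq n k / 4 ≤ vv n k j * ss n k j := by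
  unfold vv
  have h1 := hs_low h j
  have hr := pow_pos (hr0 h) j
  have hq := hq0 h
  rw [div_div, div_mul_eq_mul_div, le_div_iff₀ (by positivity)]
  nlinarith

lemma hsv_up (h : Good n k) (j : ℕ) : vv n k j * ss n k j ≤ qq n k / 2 := by
  unfold vv
  have h1 := hs_up h j
  have hr := pow_pos (hr0 h) j
  have hr1' := hrj1 h j
  have hq := hq0 h
  rw [div_div, div_mul_eq_mul_div, div_le_iff₀ (by positivity)]
  nlinarith


lemma hsv_up2 (h : Good n k) (j : ℕ) :
    vv n k j * ss n k j ≤ qq n k / 4 * (1 + (1 / rr n k) ^ j) := by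
  unfold vv
  have h1 := hs_up h j
  have hr := pow_pos (hr0 h) j
  have hq := hq0 h
  rw [div_div, div_mul_eq_mul_div, div_le_iff₀ (by positivity), one_div, inv_pow]
  have h2 : (rr n k ^ j)⁻¹ * rr n k ^ j = 1 := inv_mul_cancel₀ (ne_of_gt hr)
  nlinarith

lemma geom_lt_one {x : ℝ} (h0 : 0 ≤ x) (h1 : x < 1) (m : ℕ) :
    ∑ j ∈ range m, x ^ j ≤ 1 / (1 - x) := by
  have h2 := geom_sum_mul x m
  have h3 : (∑ j ∈ range m, x ^ j) * (1 - x) = 1 - x ^ m := by nlinarith [h2]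
  rw [le_div_iff₀ (by linarith)]
  nlinarith [pow_nonneg h0 m]

lemma hrinv (h : Good n k) : 1 / rr n k = (1 - ee n k) / (1 + ee n k) := by
  unfold rr
  have := he0 h; have := he3 h
  rw [one_div, inv_div]

lemma hgeominv (h : Good n k) :
    ∑ j ∈ range (mm n k), (1 / rr n k) ^ j ≤ (1 + ee n k) / (2 * ee n k) := by
  have he := he0 h; have he' := he3 h
  have h0 : 0 ≤ 1 / rr n k := (one_div_pos.mpr (hr0 h)).le
  have h1 : 1 / rr n k < 1 := by
    rw [hrinv h, div_lt_one (by linarith)]; linarith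
  refine le_trans (geom_lt_one h0 h1 _) ?_
  rw [hrinv h]
  have h2 : 1 - (1 - ee n k) / (1 + ee n k) = 2 * ee n k / (1 + ee n k) := by
    field_simp; ring
  rw [h2, one_div_div]

lemma hq4e (h : Good n k) : qq n k * (1 + ee n k) / (4 * ee n k) ≤ 3 / 16 := by
  have he := he0 h; have he' := he3 h
  have hc := hcube h
  have hq := hq0 h
  have hqe' := hqe h
  have hL := hL8 h
  -- q/(4e) = 9/(8L) : since q*(6 n e^2) = 1 and n e^3 = L/27
  have h1 : qq n k * (4 * ee n k) * (8 * LL n k) = qq n k * (4 * ee n k) * (8 * (27 * ((n:ℝ) * ee n k ^2 * ee n k))) := by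
    have : (n:ℝ) * ee n k ^ 3 = (n:ℝ) * ee n k ^2 * ee n k := by ring
    rw [← this, hc]; ring_nf
  have h2 : qq n k * ee n k ^ 2 * (n:ℝ) * 6 = 1 := by nlinarith [hqe']
  -- qq * e * (n e^2) * (scale): get qq * e = e^3 *6 n e^2 q ... derive q*(1+e) ≤ (3/16)*(4e) * ... do directly:
  rw [div_le_iff₀ (by positivity)]
  -- goal qq * (1+e) ≤ 3/16 * (4 e)
  -- qq = 1/(6 n e^2), so qq*(1+e) ≤ (3/4) e  ⟺  (1+e) ≤ (3/4) e * 6 n e^2 = (9/2) n e^3 = L/6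
  have h3 : (1 + ee n k) ≤ LL n k / 6 := by linarith
  have h4 : qq n k * (1 + ee n k) ≤ qq n k * (LL n k / 6) := by nlinarith
  have h5 : qq n k * (LL n k / 6) = qq n k * (27 * ((n:ℝ) * ee n k ^ 3)) / 6 := by rw [hc]; ring
  have h6 : qq n k * (27 * ((n:ℝ) * ee n k ^ 3)) / 6 = (27/36) * ee n k * (qq n k * (6 * (n:ℝ) * ee n k ^ 2)) := by ring
  rw [hqe'] at h6
  nlinarith

lemma hQ (h : Good n k) :
    ∑ j ∈ range (mm n k), 2 * vv n k j * (ss n k j : ℝ) ≤ 25/32 := by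
  have he := he0 h
  have hq := hq0 h
  have h1 : ∀ j ∈ range (mm n k), 2 * vv n k j * (ss n k j : ℝ)
      ≤ qq n k / 2 + qq n k / 2 * (1 / rr n k) ^ j := by
    intro j _
    have := hsv_up2 h j
    nlinarith
  have h2 := Finset.sum_le_sum h1
  rw [Finset.sum_add_distrib, Finset.sum_const, ← Finset.mul_sum] at h2
  have h3 := hgeominv h
  have h4 : qq n k / 2 * ∑ j ∈ range (mm n k), (1 / rr n k) ^ j
      ≤ qq n k / 2 * ((1 + ee n k) / (2 * ee n k)) := by nlinarith
  have h5 : qq n k / 2 * ((1 + ee n k) / (2 * ee n k)) = qq n k * (1+ee n k) / (4 * ee n k) := by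
    field_simp; ring
  have h6 := hq4e h
  simp only [Finset.card_range, nsmul_eq_mul] at h2
  rw [show (mm n k : ℝ) * (qq n k / 2) = (mm n k : ℝ) * qq n k / 2 by ring] at h2
  have h8 := hmq' h
  have h9 := hq316 h
  linarith

lemma hQ0 (h : Good n k) :
    0 ≤ ∑ j ∈ range (mm n k), 2 * vv n k j * (ss n k j : ℝ) := by
  apply Finset.sum_nonneg
  intro j _
  have := hv0 h j
  positivity

lemma hM_low (h : Good n k) : 7/32 ≤ MM n k := by
  unfold MM; linarith [hQ h]

lemma hM_up (h : Good n k) : MM n k ≤ 1 := by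
  unfold MM; linarith [hQ0 h]

lemma hv_le (h : Good n k) (j : ℕ) : vv n k j ≤ qq n k / 4 := by
  unfold vv
  have h1 := hrj1 h j
  have hq := hq0 h
  rw [div_le_iff₀ (by positivity)]
  nlinarith

lemma hhead (h : Good n k) : vv n k 0 * (1 + ee n k) ≤ MM n k := by
  have h1 := hv_le h 0
  have h2 := hq316 h
  have h3 := he3 h
  have h4 := he0 h
  have h5 := hM_low h
  have h6 := hq0 h
  nlinarith

lemma cc_eq (j : ℕ) : cc n k j = 2 + 2 * ∑ i ∈ range j, ss n k i := by
  induction j with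
  | zero => simp [cc]
  | succ j ih => rw [Finset.sum_range_succ]; show cc n k j + 2 * ss n k j = _; omega

lemma cc_lt_succ (h : Good n k) (j : ℕ) : cc n k j < cc n k (j+1) := by
  have := hs1 h j
  show cc n k j < cc n k j + 2 * ss n k j
  omega

lemma cc_mono (h : Good n k) : Monotone (cc n k) :=
  monotone_nat_of_le_succ (fun j => (cc_lt_succ h j).le)

lemma cc2 (j : ℕ) : 2 ≤ cc n k j := by
  rw [cc_eq]; omega

lemma hexp3 (h : Good n k) : rr n k ≤ Real.exp (3 * ee n k) := by
  have he := he0 h; have he' := he3 h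
  have h1 : rr n k ≤ 1 + 3 * ee n k := by
    unfold rr
    rw [div_le_iff₀ (by linarith)]
    nlinarith
  refine le_trans h1 ?_
  linarith [Real.add_one_le_exp (3 * ee n k)]

lemma hrm (h : Good n k) :
    rr n k ^ mm n k ≤ Real.exp (2/3 * LL n k + 1) := by
  have he := he0 h; have he' := he3 h
  have h1 : rr n k ^ mm n k ≤ Real.exp (3 * ee n k) ^ mm n k :=
    pow_le_pow_left₀ (hr0 h).le (hexp3 h) _
  have h2 : Real.exp (3 * ee n k) ^ mm n k = Real.exp (3 * ee n k * mm n k) := by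
    rw [← Real.exp_nat_mul]; ring_nf
  rw [h2] at h1
  refine le_trans h1 (Real.exp_le_exp.mpr ?_)
  have h3 := hm_up h
  have hc := hcube h
  have h4 : 3 * ee n k * (mm n k : ℝ) ≤ 3 * ee n k * (6 * n * ee n k ^2 + 1) := by nlinarith
  have h5 : 3 * ee n k * (6 * (n:ℝ) * ee n k ^2 + 1) = 18 * ((n:ℝ) * ee n k ^3) + 3 * ee n k := by ring
  rw [hc] at h5
  linarith

lemma hsum_s (h : Good n k) :
    ∑ j ∈ range (mm n k), (ss n k j : ℝ) ≤ (mm n k : ℝ) + rr n k ^ mm n k / (2 * ee n k) := by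
  have he := he0 h; have he' := he3 h
  have h1 : ∀ j ∈ range (mm n k), (ss n k j : ℝ) ≤ rr n k ^ j + 1 := fun j _ => (hs_up h j).le
  have h2 := Finset.sum_le_sum h1
  rw [Finset.sum_add_distrib, Finset.sum_const, Finset.card_range, nsmul_eq_mul, mul_one] at h2
  have h3 : ∑ j ∈ range (mm n k), rr n k ^ j ≤ rr n k ^ mm n k / (2 * ee n k) := by
    have hg := geom_sum_mul (rr n k) (mm n k)
    have hr1' := hr1 h
    have hrme : rr n k - 1 = 2 * ee n k / (1 - ee n k) := by
      have hne : (0:ℝ) < 1 - ee n k := by linarith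
      unfold rr
      rw [div_sub_one (ne_of_gt hne)]
      congr 1
      ring
    have hrm1 : 2 * ee n k ≤ rr n k - 1 := by
      rw [hrme, le_div_iff₀ (by linarith)]
      nlinarith
    have hS0 : 0 ≤ ∑ j ∈ range (mm n k), rr n k ^ j :=
      Finset.sum_nonneg fun j _ => (pow_pos (hr0 h) j).le
    rw [le_div_iff₀ (by positivity)]
    nlinarith [pow_pos (hr0 h) (mm n k)]
  linarith


lemma two_le_rpow_third {x : ℝ} (hx : 8 ≤ x) : (2:ℝ) ≤ x ^ ((1:ℝ)/3) := by
  have h8 : ((8:ℝ)) ^ ((1:ℝ)/3) = 2 := by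
    rw [show (8:ℝ) = (2:ℝ)^(3:ℕ) by norm_num, ← Real.rpow_natCast (2:ℝ) 3,
      ← Real.rpow_mul (by norm_num : (0:ℝ) ≤ 2)]
    norm_num
  calc (2:ℝ) = (8:ℝ) ^ ((1:ℝ)/3) := h8.symm
    _ ≤ x ^ ((1:ℝ)/3) := Real.rpow_le_rpow (by norm_num) hx (by norm_num)

lemma hn13 (h : Good n k) : (2:ℝ) ≤ (n:ℝ) ^ ((1:ℝ)/3) := two_le_rpow_third (hn8 h)

lemma hL13 (h : Good n k) : (2:ℝ) ≤ LL n k ^ ((1:ℝ)/3) := two_le_rpow_third (hL8 h)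

lemma hL23 (h : Good n k) : LL n k ^ ((2:ℝ)/3) ≤ LL n k := by
  have h1 : LL n k ^ ((2:ℝ)/3) ≤ LL n k ^ ((1:ℝ)) :=
    Real.rpow_le_rpow_of_exponent_le (by linarith [hL8 h]) (by norm_num)
  rwa [Real.rpow_one] at h1

lemma exp8_ge : (256:ℝ) ≤ Real.exp 8 := by
  have h1 : Real.exp 1 ^ (8:ℕ) = Real.exp 8 := by
    rw [← Real.exp_nat_mul]; norm_num
  have h2 : (2:ℝ) ≤ Real.exp 1 := by linarith [Real.add_one_le_exp (1:ℝ)]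
  calc (256:ℝ) = 2^(8:ℕ) := by norm_num
    _ ≤ Real.exp 1 ^ (8:ℕ) := pow_le_pow_left₀ (by norm_num) h2 8
    _ = Real.exp 8 := h1

lemma expL_ge (h : Good n k) : 256 * (LL n k - 7) ≤ Real.exp (LL n k) := by
  have h1 : Real.exp (LL n k) = Real.exp 8 * Real.exp (LL n k - 8) := by
    rw [← Real.exp_add]; ring_nf
  have h2 : LL n k - 7 ≤ Real.exp (LL n k - 8) := by
    linarith [Real.add_one_le_exp (LL n k - 8)]
  have h3 := hL8 h
  rw [h1]
  have h4 := exp8_ge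
  nlinarith [Real.exp_pos (LL n k - 8)]

lemma exp53 : (3:ℝ) ≤ Real.exp (5/3) := by
  have h1 : Real.exp (5/6) ^ (2:ℕ) = Real.exp (5/3) := by
    rw [← Real.exp_nat_mul]; norm_num
  have h2 : (11/6:ℝ) ≤ Real.exp (5/6) := by linarith [Real.add_one_le_exp (5/6:ℝ)]
  nlinarith [Real.exp_pos (5/6:ℝ)]

lemma hsupp (h : Good n k) : (cc n k (mm n k) : ℝ) ≤ (k:ℝ) + 1 := by
  have he := he0 h; have he' := he3 h
  have hL := hL8 h
  have hA := hn13 h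
  have hA0 : (0:ℝ) < (n:ℝ) ^ ((1:ℝ)/3) := rp0 h
  have hccm : (cc n k (mm n k) : ℝ) = 2 + 2 * ∑ j ∈ range (mm n k), (ss n k j : ℝ) := by
    rw [cc_eq]; push_cast; ring
  have h1 := hsum_s h
  -- m bound
  have hm2 : (mm n k : ℝ) ≤ (2/3) * (n:ℝ)^((1:ℝ)/3) * LL n k + 1 := by
    have := hm_up h
    have h2 := hsq h
    have h3 := hL23 h
    nlinarith
  -- r^m/(2e) bound
  have hrme : rr n k ^ mm n k / (2 * ee n k)
      ≤ (3/4) * (n:ℝ)^((1:ℝ)/3) * Real.exp (2/3 * LL n k + 1) := by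
    have h2 := hinv h
    have h3 := hrm h
    have h4 := hL13 h
    have hL3 : (0:ℝ) < LL n k ^ ((1:ℝ)/3) := by linarith
    have hrp : (0:ℝ) < rr n k ^ mm n k := pow_pos (hr0 h) _
    have hA0 : (0:ℝ) < (n:ℝ) ^ ((1:ℝ)/3) := rp0 h
    have h6 : 1 / ee n k ≤ (3/2) * (n:ℝ)^((1:ℝ)/3) := by
      rw [h2, div_le_iff₀ hL3]
      nlinarith
    have h8 : (0:ℝ) < 1 / ee n k := by positivity
    rw [show 2 * ee n k = ee n k * 2 by ring, ← div_div,
      div_le_iff₀ (by norm_num : (0:ℝ) < 2)] at *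
    · calc rr n k ^ mm n k / ee n k ≤ rr n k ^ mm n k * (1 / ee n k) := by
            rw [mul_one_div]
        _ ≤ Real.exp (2/3 * LL n k + 1) * ((3/2) * (n:ℝ)^((1:ℝ)/3)) :=
            mul_le_mul h3 h6 h8.le (Real.exp_pos _).le
        _ = 3/4 * (n:ℝ)^((1:ℝ)/3) * Real.exp (2/3 * LL n k + 1) * 2 := by ring
  -- key scalar inequality
  have hkey : 2 + (4/3) * LL n k + (3/2) * Real.exp (2/3 * LL n k + 1) ≤ Real.exp (LL n k) := by
    have h2 : Real.exp (LL n k) = Real.exp (2/3 * LL n k + 1) * Real.exp (LL n k / 3 - 1) := by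
      rw [← Real.exp_add]; ring_nf
    have h3 : (3:ℝ) ≤ Real.exp (LL n k / 3 - 1) := by
      refine le_trans exp53 (Real.exp_le_exp.mpr ?_)
      linarith
    have h4 := expL_ge h
    have h5 : (3/2) * Real.exp (2/3 * LL n k + 1) ≤ (1/2) * Real.exp (LL n k) := by
      rw [h2]
      nlinarith [Real.exp_pos (2/3 * LL n k + 1)]
    have h6 : 2 + (4/3) * LL n k ≤ (1/2) * Real.exp (LL n k) := by nlinarith
    linarith
  have hk : (k:ℝ) = (n:ℝ)^((1:ℝ)/3) * Real.exp (LL n k) := (expL h).symm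
  rw [hccm, hk]
  have hE := Real.exp_pos (2/3 * LL n k + 1)
  nlinarith [hkey, hA, h1, hm2, hrme]

lemma hsuppN (h : Good n k) : cc n k (mm n k) ≤ k + 1 := by
  have := hsupp h
  exact_mod_cast (by push_cast; linarith : ((cc n k (mm n k) : ℝ)) ≤ ((k + 1 : ℕ) : ℝ))


lemma hvstep (h : Good n k) (j : ℕ) :
    vv n k (j+1) * (1 + ee n k) = vv n k j * (1 - ee n k) := by
  unfold vv
  have hr := hr0 h
  have he := he0 h; have he' := he3 h
  have hrj := pow_pos hr j
  rw [pow_succ]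
  rw [show qq n k / 4 / (rr n k ^ j * rr n k) * (1 + ee n k)
    = qq n k / 4 / rr n k ^ j * ((1 + ee n k) / rr n k) by ring]
  congr 1
  unfold rr
  have h1 : (1:ℝ) + ee n k ≠ 0 := ne_of_gt (by linarith)
  have h2 : (1:ℝ) - ee n k ≠ 0 := ne_of_gt (by linarith)
  field_simp

def bb (b : Bool) : ℝ := if b then 1 else 0

@[simp] lemma bb_false : bb false = 0 := rfl
@[simp] lemma bb_true : bb true = 1 := rfl

lemma bb_nonneg (b : Bool) : 0 ≤ bb b := by cases b <;> simp [bb]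
lemma bb_le_one (b : Bool) : bb b ≤ 1 := by cases b <;> simp [bb]

noncomputable def fval (n k : ℕ) (j : ℕ) (b : Bool) (y : ℕ) : ℝ :=
  if y < cc n k j + ss n k j then vv n k j * (1 + ee n k * bb b)
  else vv n k j * (1 - ee n k * bb b)

lemma fval_nonneg (h : Good n k) (j : ℕ) (b : Bool) (y : ℕ) : 0 ≤ fval n k j b y := by
  unfold fval
  have hv := hv0 h j
  have he := he0 h; have he' := he3 h
  have hb := bb_nonneg b; have hb1 := bb_le_one b
  have hbb0 : 0 ≤ ee n k * bb b := mul_nonneg he.le hb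
  have hbb1 : ee n k * bb b ≤ 1/3 := by nlinarith
  have hbe : ee n k * bb b ≤ ee n k := by nlinarith
  have k1 := mul_le_mul_of_nonneg_left hbe hv.le
  have k2 := mul_le_mul_of_nonneg_left hbb1 hv.le
  have k3 := mul_nonneg hv.le hbb0
  split <;> nlinarith

lemma fval_le (h : Good n k) (j : ℕ) (b : Bool) (y : ℕ) :
    fval n k j b y ≤ vv n k j * (1 + ee n k) := by
  unfold fval
  have hv := hv0 h j
  have he := he0 h; have he' := he3 h
  have hb := bb_nonneg b; have hb1 := bb_le_one b
  have hbb0 : 0 ≤ ee n k * bb b := mul_nonneg he.le hb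
  have hbb1 : ee n k * bb b ≤ 1/3 := by nlinarith
  have hbe : ee n k * bb b ≤ ee n k := by nlinarith
  have k1 := mul_le_mul_of_nonneg_left hbe hv.le
  have k2 := mul_le_mul_of_nonneg_left hbb1 hv.le
  have k3 := mul_nonneg hv.le hbb0
  split <;> nlinarith

lemma fval_ge (h : Good n k) (j : ℕ) (b : Bool) (y : ℕ) :
    vv n k j * (1 - ee n k) ≤ fval n k j b y := by
  unfold fval
  have hv := hv0 h j
  have he := he0 h; have he' := he3 h
  have hb := bb_nonneg b; have hb1 := bb_le_one b
  have hbb0 : 0 ≤ ee n k * bb b := mul_nonneg he.le hb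
  have hbb1 : ee n k * bb b ≤ 1/3 := by nlinarith
  have hbe : ee n k * bb b ≤ ee n k := by nlinarith
  have k1 := mul_le_mul_of_nonneg_left hbe hv.le
  have k2 := mul_le_mul_of_nonneg_left hbb1 hv.le
  have k3 := mul_nonneg hv.le hbb0
  split <;> nlinarith

noncomputable def ff (n k : ℕ) (τ : Fin (mm n k) → Bool) (x : ℕ) : ℝ :=
  (if x = 1 then MM n k else 0) +
  ∑ j : Fin (mm n k),
    if x ∈ Finset.Ico (cc n k j) (cc n k ((j : ℕ) + 1)) then fval n k j (τ j) x else 0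

lemma ff_one (h : Good n k) (τ : Fin (mm n k) → Bool) : ff n k τ 1 = MM n k := by
  unfold ff
  rw [if_pos rfl]
  have hz : ∀ j ∈ (Finset.univ : Finset (Fin (mm n k))),
      (if (1:ℕ) ∈ Finset.Ico (cc n k j) (cc n k ((j : ℕ) + 1)) then fval n k j (τ j) 1 else 0) = 0 := by
    intro j _
    rw [if_neg]
    intro hc
    rw [Finset.mem_Ico] at hc
    have := cc2 (n := n) (k := k) (j : ℕ)
    omega
  rw [Finset.sum_congr rfl hz, Finset.sum_const]
  simp

lemma ff_eval (h : Good n k) (τ : Fin (mm n k) → Bool) (j : Fin (mm n k)) (y : ℕ)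
    (h1 : cc n k j ≤ y) (h2 : y < cc n k ((j : ℕ) + 1)) :
    ff n k τ y = fval n k (j : ℕ) (τ j) y := by
  unfold ff
  have hy1 : y ≠ 1 := by
    have := cc2 (n := n) (k := k) (j : ℕ); omega
  rw [if_neg hy1, Finset.sum_eq_single_of_mem j (Finset.mem_univ j), if_pos (Finset.mem_Ico.mpr ⟨h1, h2⟩), zero_add]
  intro b _ hbj
  rw [if_neg]
  intro hc
  rw [Finset.mem_Ico] at hc
  have hbj' : (b : ℕ) ≠ (j : ℕ) := fun hval => hbj (Fin.ext hval)
  rcases Nat.lt_or_ge (b : ℕ) (j : ℕ) with hl | hg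
  · have := cc_mono h (show (b:ℕ) + 1 ≤ (j:ℕ) by omega)
    omega
  · have := cc_mono h (show (j:ℕ) + 1 ≤ (b:ℕ) by omega)
    omega

lemma ff_zero (h : Good n k) (τ : Fin (mm n k) → Bool) (y : ℕ) (hy1 : y ≠ 1)
    (hy : y < 2 ∨ cc n k (mm n k) ≤ y) : ff n k τ y = 0 := by
  unfold ff
  rw [if_neg hy1]
  rw [Finset.sum_eq_zero, add_zero]
  intro j _
  rw [if_neg]
  intro hc
  rw [Finset.mem_Ico] at hc
  have hc2 := cc2 (n := n) (k := k) (j : ℕ)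
  have hcm : cc n k ((j:ℕ)+1) ≤ cc n k (mm n k) := cc_mono h (by exact j.isLt)
  omega

lemma ff_nonneg (h : Good n k) (τ : Fin (mm n k) → Bool) (x : ℕ) : 0 ≤ ff n k τ x := by
  unfold ff
  have hM := hM_low h
  apply add_nonneg
  · split <;> [linarith; rfl]
  · apply Finset.sum_nonneg
    intro j _
    split
    · exact fval_nonneg h _ _ _
    · rfl

lemma locN (h : Good n k) (M y : ℕ) (h2 : 2 ≤ y) (hy : y < cc n k M) :
    ∃ j, j < M ∧ cc n k j ≤ y ∧ y < cc n k (j+1) := by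
  induction M with
  | zero => simp [cc] at hy; omega
  | succ M ih =>
    by_cases hc : y < cc n k M
    · obtain ⟨j, hj1, hj2⟩ := ih hc
      exact ⟨j, by omega, hj2⟩
    · exact ⟨M, by omega, by omega, hy⟩

lemma ff_agree (h : Good n k) (τ : Fin (mm n k) → Bool) (i : Fin (mm n k)) (b' : Bool) (y : ℕ)
    (hy : y ∉ Finset.Ico (cc n k i) (cc n k ((i : ℕ) + 1))) :
    ff n k (Function.update τ i b') y = ff n k τ y := by
  unfold ff
  congr 1
  apply Finset.sum_congr rfl
  intro j _
  by_cases hj : j = i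
  · subst hj
    rw [if_neg hy, if_neg hy]
  · rw [Function.update_of_ne hj]

lemma pair_subset (h : Good n k) (j : Fin (mm n k)) :
    Finset.Ico (cc n k j) (cc n k ((j : ℕ) + 1)) ⊆ Finset.Icc 1 k := by
  intro y hy
  rw [Finset.mem_Ico] at hy
  rw [Finset.mem_Icc]
  have hc2 := cc2 (n := n) (k := k) (j : ℕ)
  have hcm : cc n k ((j:ℕ)+1) ≤ cc n k (mm n k) := cc_mono h (by exact j.isLt)
  have hk := hsuppN h
  omega

lemma cc_succ (j : ℕ) : cc n k (j+1) = cc n k j + 2 * ss n k j := rfl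

lemma sum_pair_fval (h : Good n k) (j : ℕ) (b : Bool) :
    ∑ y ∈ Finset.Ico (cc n k j) (cc n k (j + 1)), fval n k j b y
      = 2 * vv n k j * (ss n k j : ℝ) := by
  rw [cc_succ, ← Finset.sum_Ico_consecutive _ (show cc n k j ≤ cc n k j + ss n k j by omega)
    (show cc n k j + ss n k j ≤ cc n k j + 2 * ss n k j by omega)]
  have e1 : ∀ y ∈ Finset.Ico (cc n k j) (cc n k j + ss n k j),
      fval n k j b y = vv n k j * (1 + ee n k * bb b) := by
    intro y hy
    rw [Finset.mem_Ico] at hy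
    unfold fval
    rw [if_pos hy.2]
  have e2 : ∀ y ∈ Finset.Ico (cc n k j + ss n k j) (cc n k j + 2 * ss n k j),
      fval n k j b y = vv n k j * (1 - ee n k * bb b) := by
    intro y hy
    rw [Finset.mem_Ico] at hy
    unfold fval
    rw [if_neg (by omega)]
  rw [Finset.sum_congr rfl e1, Finset.sum_congr rfl e2, Finset.sum_const, Finset.sum_const,
    Nat.card_Ico, Nat.card_Ico, nsmul_eq_mul, nsmul_eq_mul]
  have c1 : cc n k j + ss n k j - cc n k j = ss n k j := by omega
  have c2 : cc n k j + 2 * ss n k j - (cc n k j + ss n k j) = ss n k j := by omega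
  rw [c1, c2]
  push_cast
  ring

lemma ff_mass (h : Good n k) (τ : Fin (mm n k) → Bool) :
    ∑ x ∈ Finset.Icc 1 k, ff n k τ x = 1 := by
  unfold ff
  rw [Finset.sum_add_distrib]
  have hhead : ∑ x ∈ Finset.Icc 1 k, (if x = 1 then MM n k else 0) = MM n k := by
    rw [Finset.sum_ite_eq' (Finset.Icc 1 k) 1 (fun _ => MM n k)]
    rw [if_pos (Finset.mem_Icc.mpr ⟨le_refl 1, h.hk⟩)]
  rw [hhead, Finset.sum_comm]
  have hpair : ∀ j ∈ (Finset.univ : Finset (Fin (mm n k))),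
      (∑ x ∈ Finset.Icc 1 k,
        if x ∈ Finset.Ico (cc n k j) (cc n k ((j : ℕ) + 1)) then fval n k j (τ j) x else 0)
      = 2 * vv n k (j : ℕ) * (ss n k (j : ℕ) : ℝ) := by
    intro j _
    rw [Finset.sum_ite_mem, Finset.inter_eq_right.mpr (pair_subset h j)]
    exact sum_pair_fval h (j : ℕ) (τ j)
  rw [Finset.sum_congr rfl hpair]
  rw [Fin.sum_univ_eq_sum_range (fun j => 2 * vv n k j * (ss n k j : ℝ))]
  unfold MM
  ring

lemma ff_support (h : Good n k) (τ : Fin (mm n k) → Bool) (x : ℕ)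
    (hx : x ∉ Finset.Icc 1 k) : ff n k τ x = 0 := by
  rw [Finset.mem_Icc] at hx
  push_neg at hx
  have hk1 := h.hk
  by_cases h0 : x = 0
  · subst h0
    exact ff_zero h τ 0 (by omega) (Or.inl (by omega))
  · have hxk : k + 1 ≤ x := by omega
    have := hsuppN h
    exact ff_zero h τ x (by omega) (Or.inr (by omega))


lemma ff_mono (h : Good n k) (τ : Fin (mm n k) → Bool) (x : ℕ) (hx : 1 ≤ x)
    (hxk : x + 1 ≤ k) : ff n k τ (x + 1) ≤ ff n k τ x := by
  have hm := hm1 h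
  have he := he0 h; have he' := he3 h
  rcases Nat.eq_or_lt_of_le hx with h1 | h1
  · -- x = 1
    have hx1 : x = 1 := h1.symm
    subst hx1
    rw [ff_one h τ]
    set j0 : Fin (mm n k) := ⟨0, hm⟩ with hj0
    have hc0 : cc n k (j0 : ℕ) = 2 := rfl
    have hs0 := hs1 h 0
    have hlt : (2:ℕ) < cc n k ((j0:ℕ) + 1) := by
      rw [cc_succ]
      simp only [hc0]
      have hs0' : 1 ≤ ss n k (j0:ℕ) := hs0
      omega
    rw [ff_eval h τ j0 2 (by omega) hlt]
    calc fval n k (j0 : ℕ) (τ j0) 2 ≤ vv n k 0 * (1 + ee n k) := fval_le h _ _ _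
      _ ≤ MM n k := hhead h
  · -- x ≥ 2
    have hx2 : 2 ≤ x := h1
    by_cases hbig : cc n k (mm n k) ≤ x
    · rw [ff_zero h τ x (by omega) (Or.inr hbig),
        ff_zero h τ (x+1) (by omega) (Or.inr (by omega))]
    · push_neg at hbig
      obtain ⟨j, hjm, hj1, hj2⟩ := locN h (mm n k) x hx2 hbig
      set jf : Fin (mm n k) := ⟨j, hjm⟩ with hjf
      have hfx : ff n k τ x = fval n k j (τ jf) x := ff_eval h τ jf x hj1 hj2
      by_cases hin : x + 1 < cc n k (j + 1)
      · -- same pair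
        have hfx1 : ff n k τ (x+1) = fval n k j (τ jf) (x+1) := ff_eval h τ jf (x+1) (show cc n k j ≤ x + 1 by omega) hin
        rw [hfx, hfx1]
        unfold fval
        have hv := hv0 h j
        have hb := bb_nonneg (τ jf)
        split_ifs with p1 p2 p2
        · exact le_refl _
        · omega
        · nlinarith [mul_nonneg (mul_nonneg hv.le he.le) hb]
        · exact le_refl _
      · -- x + 1 = cc (j+1)
        have hx1c : x + 1 = cc n k (j+1) := by omega
        have hlow : vv n k j * (1 - ee n k) ≤ ff n k τ x := by
          rw [hfx]; exact fval_ge h _ _ _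
        by_cases hjm1 : j + 1 < mm n k
        · set jf1 : Fin (mm n k) := ⟨j+1, hjm1⟩ with hjf1
          have hup : ff n k τ (x+1) = fval n k (j+1) (τ jf1) (x+1) :=
            ff_eval h τ jf1 (x+1) (show cc n k (j+1) ≤ x + 1 by omega)
              (show x + 1 < cc n k (j+1+1) by
                have := cc_lt_succ h (j+1)
                omega)
          rw [hup]
          calc fval n k (j+1) (τ jf1) (x+1) ≤ vv n k (j+1) * (1 + ee n k) := fval_le h _ _ _
            _ = vv n k j * (1 - ee n k) := hvstep h j
            _ ≤ ff n k τ x := hlow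
        · have hjm1' : j + 1 = mm n k := by omega
          have hz : ff n k τ (x+1) = 0 := by
            apply ff_zero h τ (x+1) (by omega)
            right
            rw [← hjm1', ← hx1c]
          rw [hz]
          calc (0:ℝ) ≤ vv n k j * (1 - ee n k) := by
                have hv := hv0 h j
                nlinarith
            _ ≤ ff n k τ x := hlow

lemma ff_mem (h : Good n k) (τ : Fin (mm n k) → Bool) : ff n k τ ∈ Fk k := by
  refine ⟨ff_nonneg h τ, ff_support h τ, ff_mass h τ, ?_⟩
  intro x hx hxk
  exact ff_mono h τ x hx hxk


lemma le_sqrt_of_sq_le {a b : ℝ} (hb : 0 ≤ b) (hab : b^2 ≤ a) : b ≤ Real.sqrt a := by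
  have ha : 0 ≤ a := le_trans (sq_nonneg b) hab
  nlinarith [Real.sq_sqrt ha, Real.sqrt_nonneg a]

lemma sqrt_le_of_le_sq {a b : ℝ} (hb : 0 ≤ b) (hab : a ≤ b^2) : Real.sqrt a ≤ b := by
  calc Real.sqrt a ≤ Real.sqrt (b^2) := Real.sqrt_le_sqrt hab
    _ = b := Real.sqrt_sq hb

lemma sqrt1p_ge {e : ℝ} (he0 : 0 ≤ e) (he1 : e ≤ 1/3) :
    1 + e/2 - e^2/8 ≤ Real.sqrt (1 + e) := by
  apply le_sqrt_of_sq_le (by nlinarith)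
  have key : 0 ≤ e^3 * (8 - e) := mul_nonneg (pow_nonneg he0 3) (by linarith)
  nlinarith [key]

lemma sqrt1p_le {e : ℝ} (he0 : 0 ≤ e) : Real.sqrt (1 + e) ≤ 1 + e/2 := by
  apply sqrt_le_of_le_sq (by nlinarith)
  nlinarith

lemma sqrt1m_ge {e : ℝ} (he0 : 0 ≤ e) (he1 : e ≤ 1/3) :
    1 - e/2 - e^2/4 ≤ Real.sqrt (1 - e) := by
  apply le_sqrt_of_sq_le (by nlinarith)
  have key : 0 ≤ e^2 * (4 - 4*e - e^2) := mul_nonneg (sq_nonneg e) (by nlinarith)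
  nlinarith [key]

lemma sqrt1m_le {e : ℝ} (he0 : 0 ≤ e) (he1 : e ≤ 1/3) : Real.sqrt (1 - e) ≤ 1 - e/2 := by
  apply sqrt_le_of_le_sq (by nlinarith)
  nlinarith

lemma hell_h_nonneg {e : ℝ} (he0 : 0 ≤ e) (he1 : e ≤ 1/3) :
    0 ≤ 2 - Real.sqrt (1 + e) - Real.sqrt (1 - e) := by
  have h1 := sqrt1p_le he0
  have h2 := sqrt1m_le he0 he1
  linarith

lemma hell_h_le {e : ℝ} (he0 : 0 ≤ e) (he1 : e ≤ 1/3) :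
    2 - Real.sqrt (1 + e) - Real.sqrt (1 - e) ≤ (3/8) * e^2 := by
  have h1 := sqrt1p_ge he0 he1
  have h2 := sqrt1m_ge he0 he1
  nlinarith

lemma sqrt_prod {ι : Type*} (s : Finset ι) (f : ι → ℝ) (hf : ∀ i ∈ s, 0 ≤ f i) :
    Real.sqrt (∏ i ∈ s, f i) = ∏ i ∈ s, Real.sqrt (f i) := by
  induction s using Finset.cons_induction with
  | empty => simp
  | cons a s ha ih =>
    rw [Finset.prod_cons, Finset.prod_cons,
      Real.sqrt_mul (hf a (Finset.mem_cons_self a s)),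
      ih (fun i hi => hf i (Finset.mem_cons_of_mem hi))]

lemma sum_pair_absdiff (h : Good n k) (j : ℕ) :
    ∑ y ∈ Finset.Ico (cc n k j) (cc n k (j + 1)), |fval n k j false y - fval n k j true y|
      = 2 * vv n k j * (ss n k j : ℝ) * ee n k := by
  have hv := hv0 h j
  have he := he0 h
  rw [cc_succ, ← Finset.sum_Ico_consecutive _ (show cc n k j ≤ cc n k j + ss n k j by omega)
    (show cc n k j + ss n k j ≤ cc n k j + 2 * ss n k j by omega)]
  have e1 : ∀ y ∈ Finset.Ico (cc n k j) (cc n k j + ss n k j),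
      |fval n k j false y - fval n k j true y| = vv n k j * ee n k := by
    intro y hy
    rw [Finset.mem_Ico] at hy
    unfold fval
    rw [if_pos hy.2, if_pos hy.2]
    simp only [bb_false, bb_true]
    rw [show vv n k j * (1 + ee n k * 0) - vv n k j * (1 + ee n k * 1)
      = -(vv n k j * ee n k) by ring, abs_neg, abs_of_nonneg (by positivity)]
  have e2 : ∀ y ∈ Finset.Ico (cc n k j + ss n k j) (cc n k j + 2 * ss n k j),
      |fval n k j false y - fval n k j true y| = vv n k j * ee n k := by
    intro y hy
    rw [Finset.mem_Ico] at hy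
    unfold fval
    rw [if_neg (by omega), if_neg (by omega)]
    simp only [bb_false, bb_true]
    rw [show vv n k j * (1 - ee n k * 0) - vv n k j * (1 - ee n k * 1)
      = vv n k j * ee n k by ring, abs_of_nonneg (by positivity)]
  rw [Finset.sum_congr rfl e1, Finset.sum_congr rfl e2, Finset.sum_const, Finset.sum_const,
    Nat.card_Ico, Nat.card_Ico, nsmul_eq_mul, nsmul_eq_mul]
  have c1 : cc n k j + ss n k j - cc n k j = ss n k j := by omega
  have c2 : cc n k j + 2 * ss n k j - (cc n k j + ss n k j) = ss n k j := by omega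
  rw [c1, c2]
  ring

lemma sum_pair_sqrt (h : Good n k) (j : ℕ) :
    ∑ y ∈ Finset.Ico (cc n k j) (cc n k (j + 1)),
        Real.sqrt (fval n k j false y * fval n k j true y)
      = vv n k j * (ss n k j : ℝ) * (Real.sqrt (1 + ee n k) + Real.sqrt (1 - ee n k)) := by
  have hv := hv0 h j
  rw [cc_succ, ← Finset.sum_Ico_consecutive _ (show cc n k j ≤ cc n k j + ss n k j by omega)
    (show cc n k j + ss n k j ≤ cc n k j + 2 * ss n k j by omega)]
  have e1 : ∀ y ∈ Finset.Ico (cc n k j) (cc n k j + ss n k j),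
      Real.sqrt (fval n k j false y * fval n k j true y)
        = vv n k j * Real.sqrt (1 + ee n k) := by
    intro y hy
    rw [Finset.mem_Ico] at hy
    unfold fval
    rw [if_pos hy.2, if_pos hy.2]
    simp only [bb_false, bb_true]
    rw [show vv n k j * (1 + ee n k * 0) * (vv n k j * (1 + ee n k * 1))
      = vv n k j ^ 2 * (1 + ee n k) by ring]
    rw [Real.sqrt_mul (sq_nonneg _), Real.sqrt_sq hv.le]
  have e2 : ∀ y ∈ Finset.Ico (cc n k j + ss n k j) (cc n k j + 2 * ss n k j),
      Real.sqrt (fval n k j false y * fval n k j true y)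
        = vv n k j * Real.sqrt (1 - ee n k) := by
    intro y hy
    rw [Finset.mem_Ico] at hy
    unfold fval
    rw [if_neg (by omega), if_neg (by omega)]
    simp only [bb_false, bb_true]
    rw [show vv n k j * (1 - ee n k * 0) * (vv n k j * (1 - ee n k * 1))
      = vv n k j ^ 2 * (1 - ee n k) by ring]
    rw [Real.sqrt_mul (sq_nonneg _), Real.sqrt_sq hv.le]
  rw [Finset.sum_congr rfl e1, Finset.sum_congr rfl e2, Finset.sum_const, Finset.sum_const,
    Nat.card_Ico, Nat.card_Ico, nsmul_eq_mul, nsmul_eq_mul]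
  have c1 : cc n k j + ss n k j - cc n k j = ss n k j := by omega
  have c2 : cc n k j + 2 * ss n k j - (cc n k j + ss n k j) = ss n k j := by omega
  rw [c1, c2]
  ring

lemma hell_r (h : Good n k) (τ : Fin (mm n k) → Bool) (i : Fin (mm n k)) (hτ : τ i = false) :
    ∑ y ∈ Finset.Icc 1 k, Real.sqrt (ff n k τ y * ff n k (Function.update τ i true) y)
      = 1 - vv n k (i : ℕ) * (ss n k (i : ℕ) : ℝ)
          * (2 - Real.sqrt (1 + ee n k) - Real.sqrt (1 - ee n k)) := by
  set τ' := Function.update τ i true with hτ'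
  have hsub : ∑ y ∈ Finset.Ico (cc n k i) (cc n k ((i:ℕ) + 1)),
        (Real.sqrt (ff n k τ y * ff n k τ' y) - ff n k τ y)
      = ∑ y ∈ Finset.Icc 1 k, (Real.sqrt (ff n k τ y * ff n k τ' y) - ff n k τ y) := by
    apply Finset.sum_subset (pair_subset h i)
    intro y _ hy
    rw [hτ', ff_agree h τ i true y hy, Real.sqrt_mul_self (ff_nonneg h τ y)]
    ring
  have hpair : ∑ y ∈ Finset.Ico (cc n k i) (cc n k ((i:ℕ) + 1)),
        (Real.sqrt (ff n k τ y * ff n k τ' y) - ff n k τ y)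
      = vv n k (i:ℕ) * (ss n k (i:ℕ) : ℝ) * (Real.sqrt (1 + ee n k) + Real.sqrt (1 - ee n k))
        - 2 * vv n k (i:ℕ) * (ss n k (i:ℕ) : ℝ) := by
    have hev : ∀ y ∈ Finset.Ico (cc n k i) (cc n k ((i:ℕ) + 1)),
        (Real.sqrt (ff n k τ y * ff n k τ' y) - ff n k τ y)
        = Real.sqrt (fval n k (i:ℕ) false y * fval n k (i:ℕ) true y) - fval n k (i:ℕ) false y := by
      intro y hy
      rw [Finset.mem_Ico] at hy
      have h1 : ff n k τ y = fval n k (i:ℕ) (τ i) y := ff_eval h τ i y hy.1 hy.2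
      have h2 : ff n k τ' y = fval n k (i:ℕ) (τ' i) y := ff_eval h τ' i y hy.1 hy.2
      rw [h1, h2, hτ, hτ', Function.update_self]
    rw [Finset.sum_congr rfl hev, Finset.sum_sub_distrib, sum_pair_sqrt h, sum_pair_fval h]
  rw [Finset.sum_sub_distrib, Finset.sum_sub_distrib, ff_mass h τ] at hsub
  rw [Finset.sum_sub_distrib] at hpair
  linarith

lemma hell_r_bound (h : Good n k) (j : ℕ) :
    vv n k j * (ss n k j : ℝ) * (2 - Real.sqrt (1 + ee n k) - Real.sqrt (1 - ee n k))
      ≤ 1 / (32 * n) := by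
  have he := he0 h; have he' := he3 h
  have h1 := hsv_up h j
  have h2 := hell_h_le he.le he'
  have h3 := hell_h_nonneg he.le he'
  have h4 := hqe h
  have hsv0 : 0 ≤ vv n k j * (ss n k j : ℝ) := le_trans (by linarith [hq0 h]) (hsv_low h j)
  have h5 : vv n k j * (ss n k j : ℝ) * (2 - Real.sqrt (1 + ee n k) - Real.sqrt (1 - ee n k))
      ≤ (qq n k / 2) * ((3/8) * ee n k ^2) := by
    apply mul_le_mul h1 h2 h3 (by linarith [hq0 h])
  refine le_trans h5 ?_
  have hn0 := n0 h
  rw [le_div_iff₀ (by positivity : (0:ℝ) < 32*n)]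
  nlinarith [h4]


def DD (n k : ℕ) : Finset (Fin n → ℕ) := Fintype.piFinset (fun _ : Fin n => Finset.Icc 1 k)

noncomputable def PP (n k : ℕ) (τ : Fin (mm n k) → Bool) (x : Fin n → ℕ) : ℝ :=
  ∏ i, ff n k τ (x i)

lemma PP_nonneg (h : Good n k) (τ : Fin (mm n k) → Bool) (x : Fin n → ℕ) :
    0 ≤ PP n k τ x :=
  Finset.prod_nonneg (fun i _ => ff_nonneg h τ (x i))

lemma PP_mass (h : Good n k) (τ : Fin (mm n k) → Bool) :
    ∑ x ∈ DD n k, PP n k τ x = 1 := by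
  unfold DD PP
  rw [← Finset.prod_univ_sum]
  simp [ff_mass h τ]

lemma BC_eq (h : Good n k) (τ τ' : Fin (mm n k) → Bool) :
    ∑ x ∈ DD n k, Real.sqrt (PP n k τ x * PP n k τ' x)
      = (∑ y ∈ Finset.Icc 1 k, Real.sqrt (ff n k τ y * ff n k τ' y)) ^ n := by
  have hpt : ∀ x ∈ DD n k, Real.sqrt (PP n k τ x * PP n k τ' x)
      = ∏ i, Real.sqrt (ff n k τ (x i) * ff n k τ' (x i)) := by
    intro x _
    unfold PP
    rw [← Finset.prod_mul_distrib]
    exact sqrt_prod _ _ (fun i _ => mul_nonneg (ff_nonneg h τ _) (ff_nonneg h τ' _))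
  rw [Finset.sum_congr rfl hpt]
  unfold DD
  rw [← Finset.prod_univ_sum (t := fun _ : Fin n => Finset.Icc 1 k)
    (f := fun _ y => Real.sqrt (ff n k τ y * ff n k τ' y))]
  rw [Finset.prod_const, Finset.card_univ, Fintype.card_fin]

lemma min_eq_half {a b : ℝ} : min a b = (a + b - |a - b|)/2 := by
  rcases le_total a b with hab | hab
  · rw [min_eq_left hab, abs_of_nonpos (by linarith)]; ring
  · rw [min_eq_right hab, abs_of_nonneg (by linarith)]; ring

lemma min_sum (h : Good n k) (τ : Fin (mm n k) → Bool) (i : Fin (mm n k)) (hτ : τ i = false) :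
    (3:ℝ)/4 ≤ ∑ x ∈ DD n k, min (PP n k τ x) (PP n k (Function.update τ i true) x) := by
  set τ' := Function.update τ i true with hτ'
  set r := ∑ y ∈ Finset.Icc 1 k, Real.sqrt (ff n k τ y * ff n k τ' y) with hrdef
  have he := he0 h; have he' := he3 h
  have hn0 := n0 h
  have hsv0 : 0 ≤ vv n k (i:ℕ) * ((ss n k (i:ℕ)):ℝ) :=
    le_trans (by linarith [hq0 h]) (hsv_low h (i:ℕ))
  have hh0 := hell_h_nonneg he.le he'
  have hrval : r = 1 - vv n k (i:ℕ) * ((ss n k (i:ℕ)):ℝ)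
      * (2 - Real.sqrt (1 + ee n k) - Real.sqrt (1 - ee n k)) := hell_r h τ i hτ
  have hrb : 1 - 1/(32*(n:ℝ)) ≤ r := by
    rw [hrval]
    linarith [hell_r_bound h (i:ℕ)]
  have hr1 : r ≤ 1 := by
    rw [hrval]
    nlinarith [mul_nonneg hsv0 hh0]
  have hn1 : (1:ℝ) ≤ (n:ℝ) := by exact_mod_cast h.hn
  have hr0 : (0:ℝ) ≤ r := by
    have : 1/(32*(n:ℝ)) ≤ 1/32 := by
      rw [div_le_div_iff₀ (by positivity) (by norm_num)]
      nlinarith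
    linarith
  have hBC : ∑ x ∈ DD n k, Real.sqrt (PP n k τ x * PP n k τ' x) = r ^ n :=
    BC_eq h τ τ'
  have hBC1 : r ^ n ≤ 1 := pow_le_one₀ hr0 hr1
  have hBern : 1 - (n:ℝ) * (1 - r) ≤ r ^ n := by
    have := one_add_mul_le_pow (a := r - 1) (by linarith) n
    calc 1 - (n:ℝ) * (1 - r) = 1 + (n:ℝ) * (r - 1) := by ring
      _ ≤ (1 + (r - 1)) ^ n := this
      _ = r ^ n := by rw [show 1 + (r - 1) = r by ring]
  have hn1r : (n:ℝ) * (1 - r) ≤ 1/32 := by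
    have h1 : 1 - r ≤ 1/(32*(n:ℝ)) := by linarith
    have h2 : (n:ℝ) * (1 - r) ≤ (n:ℝ) * (1/(32*(n:ℝ))) :=
      mul_le_mul_of_nonneg_left h1 hn0.le
    have h3 : (n:ℝ) * (1/(32*(n:ℝ))) = 1/32 := by field_simp
    linarith
  have hBC2 : (31:ℝ)/32 ≤ r ^ n := by linarith
  -- Cauchy-Schwarz
  have hT0 : 0 ≤ ∑ x ∈ DD n k, |PP n k τ x - PP n k τ' x| :=
    Finset.sum_nonneg (fun x _ => abs_nonneg _)
  have hCS := Finset.sum_mul_sq_le_sq_mul_sq (DD n k)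
    (fun x => |Real.sqrt (PP n k τ x) - Real.sqrt (PP n k τ' x)|)
    (fun x => Real.sqrt (PP n k τ x) + Real.sqrt (PP n k τ' x))
  have hfg : ∀ x ∈ DD n k,
      |Real.sqrt (PP n k τ x) - Real.sqrt (PP n k τ' x)|
        * (Real.sqrt (PP n k τ x) + Real.sqrt (PP n k τ' x))
      = |PP n k τ x - PP n k τ' x| := by
    intro x _
    have e1 := Real.sq_sqrt (PP_nonneg h τ x)
    have e2 := Real.sq_sqrt (PP_nonneg h τ' x)
    rw [← abs_of_nonneg (add_nonneg (Real.sqrt_nonneg _) (Real.sqrt_nonneg _)), ← abs_mul]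
    rw [show (Real.sqrt (PP n k τ x) - Real.sqrt (PP n k τ' x))
        * (Real.sqrt (PP n k τ x) + Real.sqrt (PP n k τ' x))
      = Real.sqrt (PP n k τ x)^2 - Real.sqrt (PP n k τ' x)^2 by ring, e1, e2]
  have hf2 : ∀ x ∈ DD n k,
      |Real.sqrt (PP n k τ x) - Real.sqrt (PP n k τ' x)|^2
      = PP n k τ x + PP n k τ' x - 2 * Real.sqrt (PP n k τ x * PP n k τ' x) := by
    intro x _
    have e1 := Real.sq_sqrt (PP_nonneg h τ x)
    have e2 := Real.sq_sqrt (PP_nonneg h τ' x)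
    rw [sq_abs, Real.sqrt_mul (PP_nonneg h τ x)]
    nlinarith [Real.sqrt_nonneg (PP n k τ x), Real.sqrt_nonneg (PP n k τ' x)]
  have hg2 : ∀ x ∈ DD n k,
      (Real.sqrt (PP n k τ x) + Real.sqrt (PP n k τ' x))^2
      = PP n k τ x + PP n k τ' x + 2 * Real.sqrt (PP n k τ x * PP n k τ' x) := by
    intro x _
    have e1 := Real.sq_sqrt (PP_nonneg h τ x)
    have e2 := Real.sq_sqrt (PP_nonneg h τ' x)
    rw [Real.sqrt_mul (PP_nonneg h τ x)]
    nlinarith [Real.sqrt_nonneg (PP n k τ x), Real.sqrt_nonneg (PP n k τ' x)]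
  rw [Finset.sum_congr rfl hfg] at hCS
  rw [Finset.sum_congr rfl hf2, Finset.sum_congr rfl hg2] at hCS
  have hsplitA : ∑ x ∈ DD n k,
      (PP n k τ x + PP n k τ' x - 2 * Real.sqrt (PP n k τ x * PP n k τ' x))
      = 2 - 2 * r ^ n := by
    rw [Finset.sum_sub_distrib, Finset.sum_add_distrib, PP_mass h τ, PP_mass h τ',
      ← Finset.mul_sum, hBC]
    ring
  have hsplitB : ∑ x ∈ DD n k,
      (PP n k τ x + PP n k τ' x + 2 * Real.sqrt (PP n k τ x * PP n k τ' x))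
      = 2 + 2 * r ^ n := by
    rw [Finset.sum_add_distrib, Finset.sum_add_distrib, PP_mass h τ, PP_mass h τ',
      ← Finset.mul_sum, hBC]
    ring
  rw [hsplitA, hsplitB] at hCS
  have hThalf : ∑ x ∈ DD n k, |PP n k τ x - PP n k τ' x| ≤ 1/2 := by
    nlinarith [hBC1, hBC2, hCS, hT0]
  have hmin : ∑ x ∈ DD n k, min (PP n k τ x) (PP n k τ' x)
      = 1 - (∑ x ∈ DD n k, |PP n k τ x - PP n k τ' x|)/2 := by
    have hpt : ∀ x ∈ DD n k, min (PP n k τ x) (PP n k τ' x)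
        = (PP n k τ x + PP n k τ' x - |PP n k τ x - PP n k τ' x|)/2 :=
      fun x _ => min_eq_half
    rw [Finset.sum_congr rfl hpt]
    rw [← Finset.sum_div, Finset.sum_sub_distrib, Finset.sum_add_distrib,
      PP_mass h τ, PP_mass h τ']
    ring
  rw [hmin]
  linarith


noncomputable def eI (n k : ℕ) (j : ℕ) (b : Bool) (g : ℕ → ℝ) : ℝ :=
  (∑ y ∈ Finset.Ico (cc n k j) (cc n k (j+1)), |g y - fval n k j b y|) / 2

lemma eI_nonneg (n k : ℕ) (j : ℕ) (b : Bool) (g : ℕ → ℝ) : 0 ≤ eI n k j b g := by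
  unfold eI
  have : 0 ≤ ∑ y ∈ Finset.Ico (cc n k j) (cc n k (j+1)), |g y - fval n k j b y| :=
    Finset.sum_nonneg (fun y _ => abs_nonneg _)
  linarith

lemma eI_pair (h : Good n k) (j : ℕ) (g : ℕ → ℝ) :
    ee n k * qq n k / 4 ≤ eI n k j false g + eI n k j true g := by
  have htri : ∀ y ∈ Finset.Ico (cc n k j) (cc n k (j+1)),
      |fval n k j false y - fval n k j true y|
        ≤ |g y - fval n k j false y| + |g y - fval n k j true y| := by
    intro y _
    calc |fval n k j false y - fval n k j true y|
        ≤ |fval n k j false y - g y| + |g y - fval n k j true y| := abs_sub_le _ _ _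
      _ = |g y - fval n k j false y| + |g y - fval n k j true y| := by rw [abs_sub_comm]
  have hsum := Finset.sum_le_sum htri
  rw [sum_pair_absdiff h j, Finset.sum_add_distrib] at hsum
  have hlow := hsv_low h j
  have he := he0 h
  have hq := hq0 h
  unfold eI
  have : ee n k * (qq n k / 4) ≤ ee n k * (vv n k j * (ss n k j : ℝ)) := by
    apply mul_le_mul_of_nonneg_left hlow he.le
  nlinarith

lemma pairs_disjoint (h : Good n k) :
    ((Finset.univ : Finset (Fin (mm n k))) : Set (Fin (mm n k))).PairwiseDisjoint
      (fun j : Fin (mm n k) => Finset.Ico (cc n k (j:ℕ)) (cc n k ((j:ℕ)+1))) := by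
  intro a _ b _ hab
  have hab' : (a:ℕ) ≠ (b:ℕ) := fun hv => hab (Fin.ext hv)
  rw [Function.onFun, Finset.disjoint_left]
  intro y hy1 hy2
  rw [Finset.mem_Ico] at hy1 hy2
  rcases Nat.lt_or_ge (a:ℕ) (b:ℕ) with hl | hg
  · have := cc_mono h (show (a:ℕ)+1 ≤ (b:ℕ) by omega)
    omega
  · have := cc_mono h (show (b:ℕ)+1 ≤ (a:ℕ) by omega)
    omega

lemma TV_decomp (h : Good n k) (τ : Fin (mm n k) → Bool) (g : ℕ → ℝ) :
    ∑ j : Fin (mm n k), eI n k (j:ℕ) (τ j) g ≤ TVk k g (ff n k τ) := by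
  unfold TVk eI
  rw [← Finset.sum_div]
  have hnum : ∑ j : Fin (mm n k), ∑ y ∈ Finset.Ico (cc n k (j:ℕ)) (cc n k ((j:ℕ)+1)),
        |g y - fval n k (j:ℕ) (τ j) y|
      ≤ ∑ x ∈ Finset.Icc 1 k, |g x - ff n k τ x| := by
    calc ∑ j : Fin (mm n k), ∑ y ∈ Finset.Ico (cc n k (j:ℕ)) (cc n k ((j:ℕ)+1)),
          |g y - fval n k (j:ℕ) (τ j) y|
        = ∑ j : Fin (mm n k), ∑ y ∈ Finset.Ico (cc n k (j:ℕ)) (cc n k ((j:ℕ)+1)),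
          |g y - ff n k τ y| := by
          apply Finset.sum_congr rfl
          intro j _
          apply Finset.sum_congr rfl
          intro y hy
          rw [Finset.mem_Ico] at hy
          rw [ff_eval h τ j y hy.1 hy.2]
      _ = ∑ y ∈ Finset.univ.biUnion
            (fun j : Fin (mm n k) => Finset.Ico (cc n k (j:ℕ)) (cc n k ((j:ℕ)+1))),
          |g y - ff n k τ y| := (Finset.sum_biUnion (pairs_disjoint h)).symm
      _ ≤ ∑ x ∈ Finset.Icc 1 k, |g x - ff n k τ x| :=
          Finset.sum_le_sum_of_subset_of_nonneg
            (Finset.biUnion_subset.mpr (fun j _ => pair_subset h j))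
            (fun x _ _ => abs_nonneg _)
  linarith


lemma pair_sum {m : ℕ} (i : Fin m) (G : (Fin m → Bool) → ℝ) :
    ∑ τ : Fin m → Bool, G τ
      = ∑ τ ∈ Finset.univ.filter (fun τ : Fin m → Bool => τ i = false),
          (G τ + G (Function.update τ i true)) := by
  classical
  rw [Finset.sum_add_distrib]
  rw [← Finset.sum_filter_add_sum_filter_not Finset.univ (fun τ : Fin m → Bool => τ i = false) G]
  congr 1
  apply Finset.sum_nbij' (i := fun τ => Function.update τ i false)
    (j := fun τ => Function.update τ i true)
  · intro a ha
    simp only [Finset.mem_filter, Finset.mem_univ, true_and] at *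
    simp [Function.update_self]
  · intro a ha
    simp only [Finset.mem_filter, Finset.mem_univ, true_and] at *
    simp [Function.update_self]
  · intro a ha
    simp only [Finset.mem_filter, Finset.mem_univ, true_and] at ha
    funext j
    by_cases hj : j = i
    · subst hj; simp [Function.update_self]
      push_neg at ha
      simp [ha]
    · simp [Function.update_of_ne hj]
  · intro a ha
    simp only [Finset.mem_filter, Finset.mem_univ, true_and] at ha
    funext j
    by_cases hj : j = i
    · subst hj; simp [Function.update_self, ha]
    · simp [Function.update_of_ne hj]
  · intro a ha
    simp only [Finset.mem_filter, Finset.mem_univ, true_and] at ha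
    congr 1
    funext j
    by_cases hj : j = i
    · subst hj; simp [Function.update_self, ha]
    · simp [Function.update_of_ne hj]

lemma card_filter_false {m : ℕ} (i : Fin m) :
    ((Finset.univ.filter (fun τ : Fin m → Bool => τ i = false)).card : ℝ) = 2^m / 2 := by
  have h1 := pair_sum i (fun _ => (1:ℝ))
  rw [Finset.sum_const, Finset.sum_const, Finset.card_univ] at h1
  have h2 : Fintype.card (Fin m → Bool) = 2^m := by
    rw [Fintype.card_fun, Fintype.card_bool, Fintype.card_fin]
  rw [h2] at h1
  simp only [nsmul_eq_mul, mul_one] at h1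
  have : ((2:ℝ))^m = (((2^m : ℕ)):ℝ) := by push_cast; ring
  rw [this]
  rw [h1]
  push_cast
  ring

noncomputable def Val (n k : ℕ) (φ : (Fin n → ℕ) → ℕ → ℝ) (τ : Fin (mm n k) → Bool) : ℝ :=
  ∑ x ∈ DD n k, PP n k τ x * TVk k (φ x) (ff n k τ)

lemma W_pair (h : Good n k) (φ : (Fin n → ℕ) → ℕ → ℝ) (i : Fin (mm n k))
    (τ : Fin (mm n k) → Bool) (hτ : τ i = false) :
    (3:ℝ)/4 * (ee n k * qq n k / 4)
      ≤ (∑ x ∈ DD n k, PP n k τ x * eI n k (i:ℕ) false (φ x))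
        + ∑ x ∈ DD n k, PP n k (Function.update τ i true) x * eI n k (i:ℕ) true (φ x) := by
  set τ' := Function.update τ i true with hτ'
  have hδ : 0 ≤ ee n k * qq n k / 4 := by
    have := he0 h; have := hq0 h; positivity
  have hstep1 : ∀ x ∈ DD n k,
      min (PP n k τ x) (PP n k τ' x) * (ee n k * qq n k / 4)
        ≤ PP n k τ x * eI n k (i:ℕ) false (φ x) + PP n k τ' x * eI n k (i:ℕ) true (φ x) := by
    intro x _
    have hmin0 : 0 ≤ min (PP n k τ x) (PP n k τ' x) :=
      le_min (PP_nonneg h τ x) (PP_nonneg h τ' x)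
    have h1 : min (PP n k τ x) (PP n k τ' x) * (ee n k * qq n k / 4)
        ≤ min (PP n k τ x) (PP n k τ' x) * (eI n k (i:ℕ) false (φ x) + eI n k (i:ℕ) true (φ x)) :=
      mul_le_mul_of_nonneg_left (eI_pair h (i:ℕ) (φ x)) hmin0
    have h2 : min (PP n k τ x) (PP n k τ' x) * (eI n k (i:ℕ) false (φ x) + eI n k (i:ℕ) true (φ x))
        ≤ PP n k τ x * eI n k (i:ℕ) false (φ x) + PP n k τ' x * eI n k (i:ℕ) true (φ x) := by
      have e1 := eI_nonneg n k (i:ℕ) false (φ x)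
      have e2 := eI_nonneg n k (i:ℕ) true (φ x)
      have m1 : min (PP n k τ x) (PP n k τ' x) ≤ PP n k τ x := min_le_left _ _
      have m2 : min (PP n k τ x) (PP n k τ' x) ≤ PP n k τ' x := min_le_right _ _
      nlinarith
    linarith
  have hsum := Finset.sum_le_sum hstep1
  rw [← Finset.sum_mul, Finset.sum_add_distrib] at hsum
  have hmin := min_sum h τ i hτ
  nlinarith

lemma main_avg (h : Good n k) (φ : (Fin n → ℕ) → ℕ → ℝ) :
    (mm n k : ℝ) * (2^(mm n k) / 2) * ((3:ℝ)/4 * (ee n k * qq n k / 4))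
      ≤ ∑ τ : Fin (mm n k) → Bool, Val n k φ τ := by
  have step1 : ∀ τ : Fin (mm n k) → Bool,
      ∑ i : Fin (mm n k), (∑ x ∈ DD n k, PP n k τ x * eI n k (i:ℕ) (τ i) (φ x))
        ≤ Val n k φ τ := by
    intro τ
    unfold Val
    rw [Finset.sum_comm]
    apply Finset.sum_le_sum
    intro x _
    rw [← Finset.mul_sum]
    exact mul_le_mul_of_nonneg_left (TV_decomp h τ (φ x)) (PP_nonneg h τ x)
  have step2 : ∑ τ : Fin (mm n k) → Bool,
      ∑ i : Fin (mm n k), (∑ x ∈ DD n k, PP n k τ x * eI n k (i:ℕ) (τ i) (φ x))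
      ≤ ∑ τ : Fin (mm n k) → Bool, Val n k φ τ :=
    Finset.sum_le_sum (fun τ _ => step1 τ)
  refine le_trans ?_ step2
  rw [Finset.sum_comm]
  have step3 : ∀ i : Fin (mm n k),
      (2^(mm n k) / 2) * ((3:ℝ)/4 * (ee n k * qq n k / 4))
      ≤ ∑ τ : Fin (mm n k) → Bool, ∑ x ∈ DD n k, PP n k τ x * eI n k (i:ℕ) (τ i) (φ x) := by
    intro i
    rw [pair_sum i]
    have hterm : ∀ τ ∈ Finset.univ.filter (fun τ : Fin (mm n k) → Bool => τ i = false),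
        (3:ℝ)/4 * (ee n k * qq n k / 4)
        ≤ (∑ x ∈ DD n k, PP n k τ x * eI n k (i:ℕ) (τ i) (φ x))
          + ∑ x ∈ DD n k, PP n k (Function.update τ i true) x
              * eI n k (i:ℕ) ((Function.update τ i true) i) (φ x) := by
      intro τ hτ
      rw [Finset.mem_filter] at hτ
      have hτi := hτ.2
      rw [hτi, Function.update_self]
      exact W_pair h φ i τ hτi
    have hsum := Finset.sum_le_sum hterm
    rw [Finset.sum_const, nsmul_eq_mul] at hsum
    rw [card_filter_false i] at hsum
    linarith
  calc (mm n k : ℝ) * (2^(mm n k) / 2) * ((3:ℝ)/4 * (ee n k * qq n k / 4))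
      = ∑ _i : Fin (mm n k), (2^(mm n k) / 2) * ((3:ℝ)/4 * (ee n k * qq n k / 4)) := by
        rw [Finset.sum_const, Finset.card_univ, Fintype.card_fin, nsmul_eq_mul]; ring
    _ ≤ _ := Finset.sum_le_sum (fun i _ => step3 i)

lemma exists_tau (h : Good n k) (φ : (Fin n → ℕ) → ℕ → ℝ) :
    ∃ τ : Fin (mm n k) → Bool,
      (3:ℝ)/32 * ((mm n k : ℝ) * qq n k) * ee n k ≤ Val n k φ τ := by
  by_contra hc
  push_neg at hc
  have hlt : ∑ τ : Fin (mm n k) → Bool, Val n k φ τ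
      < ∑ _τ : Fin (mm n k) → Bool, (3:ℝ)/32 * ((mm n k : ℝ) * qq n k) * ee n k :=
    Finset.sum_lt_sum_of_nonempty (by simp [Finset.univ_nonempty]) (fun τ _ => hc τ)
  rw [Finset.sum_const, Finset.card_univ, nsmul_eq_mul] at hlt
  have h2 : Fintype.card (Fin (mm n k) → Bool) = 2^(mm n k) := by
    rw [Fintype.card_fun, Fintype.card_bool, Fintype.card_fin]
  rw [h2] at hlt
  have h3 := main_avg h φ
  have hcast : ((2^(mm n k) : ℕ) : ℝ) = (2:ℝ)^(mm n k) := by push_cast; ring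
  rw [hcast] at hlt
  nlinarith [h3, hlt]


lemma sum_prod_mass (h : Good n k) (f : ℕ → ℝ) (hf1 : ∑ y ∈ Finset.Icc 1 k, f y = 1) :
    ∑ x ∈ DD n k, (∏ i, f (x i)) = 1 := by
  unfold DD
  rw [← Finset.prod_univ_sum]
  simp [hf1]

lemma val_le_risk (h : Good n k) (φ : (Fin n → ℕ) → ℕ → ℝ) (τ : Fin (mm n k) → Bool) :
    Val n k φ τ ≤ risk n k φ (Fk k) := by
  classical
  set C : ℝ := (∑ x ∈ DD n k, ∑ y ∈ Finset.Icc 1 k, |φ x y|) + 1 with hC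
  have hbound : ∀ f ∈ Fk k,
      (∑ x ∈ DD n k, (∏ i, f (x i)) * TVk k (φ x) f) ≤ C / 2 := by
    intro f hf
    obtain ⟨hf0, hfs, hf1, hfm⟩ := hf
    have hTV : ∀ x ∈ DD n k, TVk k (φ x) f ≤ C / 2 := by
      intro x hx
      unfold TVk
      have h1 : ∀ y ∈ Finset.Icc 1 k, |φ x y - f y| ≤ |φ x y| + f y := by
        intro y _
        calc |φ x y - f y| ≤ |φ x y| + |f y| := abs_sub _ _
          _ = |φ x y| + f y := by rw [abs_of_nonneg (hf0 y)]
      have h2 := Finset.sum_le_sum h1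
      rw [Finset.sum_add_distrib, hf1] at h2
      have h3 : ∑ y ∈ Finset.Icc 1 k, |φ x y|
          ≤ ∑ x' ∈ DD n k, ∑ y ∈ Finset.Icc 1 k, |φ x' y| :=
        Finset.single_le_sum
          (f := fun x' => ∑ y ∈ Finset.Icc 1 k, |φ x' y|)
          (fun x' _ => Finset.sum_nonneg (fun y _ => abs_nonneg _)) hx
      rw [hC]
      have h4 : ∑ y ∈ Finset.Icc 1 k, |φ x y - f y|
          ≤ (∑ x' ∈ DD n k, ∑ y ∈ Finset.Icc 1 k, |φ x' y|) + 1 := by linarith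
      linarith
    have hstep : ∀ x ∈ DD n k, (∏ i, f (x i)) * TVk k (φ x) f
        ≤ (∏ i, f (x i)) * (C / 2) := by
      intro x hx
      exact mul_le_mul_of_nonneg_left (hTV x hx)
        (Finset.prod_nonneg (fun i _ => hf0 (x i)))
    calc ∑ x ∈ DD n k, (∏ i, f (x i)) * TVk k (φ x) f
        ≤ ∑ x ∈ DD n k, (∏ i, f (x i)) * (C / 2) := Finset.sum_le_sum hstep
      _ = (∑ x ∈ DD n k, (∏ i, f (x i))) * (C / 2) := by rw [← Finset.sum_mul]
      _ = C / 2 := by rw [sum_prod_mass h f hf1, one_mul]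
  have hbdd : BddAbove (Set.range (fun f : ℕ → ℝ =>
      ⨆ _ : f ∈ Fk k, ∑ x ∈ Fintype.piFinset (fun _ : Fin n => Finset.Icc 1 k),
        (∏ i, f (x i)) * TVk k (φ x) f)) := by
    refine ⟨max (C/2) 0, ?_⟩
    rintro y ⟨f, rfl⟩
    dsimp only
    by_cases hf : f ∈ Fk k
    · rw [ciSup_pos hf]
      exact le_max_of_le_left (hbound f hf)
    · haveI : IsEmpty (f ∈ Fk k) := ⟨hf⟩
      rw [Real.iSup_of_isEmpty]
      exact le_max_right _ _
  have hmem := ff_mem h τ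
  have hkey : Val n k φ τ = ⨆ _ : ff n k τ ∈ Fk k,
      ∑ x ∈ Fintype.piFinset (fun _ : Fin n => Finset.Icc 1 k),
        (∏ i, ff n k τ (x i)) * TVk k (φ x) (ff n k τ) := by
    rw [ciSup_pos hmem]
    rfl
  rw [hkey]
  unfold risk
  exact le_ciSup hbdd (ff n k τ)

lemma main_per_phi (h : Good n k) (φ : (Fin n → ℕ) → ℕ → ℝ) :
    (1:ℝ)/32 * (3 * ee n k) ≤ risk n k φ (Fk k) := by
  obtain ⟨τ, hτ⟩ := exists_tau h φ
  refine le_trans (le_trans ?_ hτ) (val_le_risk h φ τ)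
  have hmq' := hmq h
  have he := he0 h
  nlinarith

end S18

/-- **Lower bound in Theorem 2.1, large-`k` regime**: if `n` and `k` are positive
integers with `e^8 n^{1/3} ≤ k ≤ n^{1/3} e^n`, then
`R_n(F_k) ≥ (1/32) (log(k / n^{1/3}) / n)^{1/3}`, where `log` is the natural
logarithm. -/
theorem stmt18 (n k : ℕ) (hn : 1 ≤ n) (hk : 1 ≤ k)
    (hk1 : Real.exp 8 * (n : ℝ) ^ ((1 : ℝ) / 3) ≤ (k : ℝ))
    (hk2 : (k : ℝ) ≤ (n : ℝ) ^ ((1 : ℝ) / 3) * Real.exp n) :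
    (1 / 32) * (Real.log ((k : ℝ) / (n : ℝ) ^ ((1 : ℝ) / 3)) / n) ^ ((1 : ℝ) / 3) ≤
      minimaxRisk n k (Fk k) := by
  have hgood : S18.Good n k := ⟨hn, hk, hk1, hk2⟩
  have htgt : Real.log ((k:ℝ) / (n:ℝ)^((1:ℝ)/3)) = S18.LL n k := by
    rw [Real.log_div (ne_of_gt (S18.k0 hgood)) (ne_of_gt (S18.rp0 hgood)),
      S18.log_rpow_third hgood]
    rfl
  rw [htgt]
  have h3e : (S18.LL n k / n) ^ ((1:ℝ)/3) = 3 * S18.ee n k := by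
    unfold S18.ee
    ring
  rw [h3e]
  unfold minimaxRisk
  apply le_ciInf
  intro φ
  exact S18.main_per_phi hgood φ
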